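/- Let G be a subgroup of GL(2,ℝ). Suppose B₁ and B₂ are two linearly independent nondegenerate symmetric bilinear forms on ℝ² that are both preserved by every element of G (i.e. Bᵢ(g·v, g·w) = Bᵢ(v,w) for all g ∈ G, v,w ∈ ℝ², i = 1,2). Then G acts reducibly on ℝ², i.e. there exists a G-invariant linear subspace W of ℝ² with W ≠ 0 and W ≠ ℝ². -/

import Mathlib

open Matrix

/-- **Theorem 2.1 (ii).** If a subgroup `G` of `GL(2, ℝ)` preserves two linearly
independent nondegenerate symmetric bilinear forms on `ℝ²`, then `G` acts
reducibly on `ℝ²`. -/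
theorem reducible_of_two_forms_dim_two
    (G : Subgroup (GL (Fin 2) ℝ))
    (B₁ B₂ : LinearMap.BilinForm ℝ (Fin 2 → ℝ))
    (hsymm₁ : ∀ v w, B₁ v w = B₁ w v)
    (hsymm₂ : ∀ v w, B₂ v w = B₂ w v)
    (hnd₁ : ∀ v, (∀ w, B₁ v w = 0) → v = 0)
    (hnd₂ : ∀ v, (∀ w, B₂ v w = 0) → v = 0)
    (hind : LinearIndependent ℝ ![B₁, B₂])
    (hinv₁ : ∀ g ∈ G, ∀ v w : Fin 2 → ℝ,
      B₁ ((g : Matrix (Fin 2) (Fin 2) ℝ).mulVec v)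
         ((g : Matrix (Fin 2) (Fin 2) ℝ).mulVec w) = B₁ v w)
    (hinv₂ : ∀ g ∈ G, ∀ v w : Fin 2 → ℝ,
      B₂ ((g : Matrix (Fin 2) (Fin 2) ℝ).mulVec v)
         ((g : Matrix (Fin 2) (Fin 2) ℝ).mulVec w) = B₂ v w) :
    ∃ W : Submodule ℝ (Fin 2 → ℝ), W ≠ ⊥ ∧ W ≠ ⊤ ∧
      ∀ g ∈ G, ∀ v ∈ W, (g : Matrix (Fin 2) (Fin 2) ℝ).mulVec v ∈ W := by
  classical
  -- matrices of the bilinear forms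
  set M₁ : Matrix (Fin 2) (Fin 2) ℝ := LinearMap.BilinForm.toMatrix' B₁ with hM₁def
  set M₂ : Matrix (Fin 2) (Fin 2) ℝ := LinearMap.BilinForm.toMatrix' B₂ with hM₂def
  have hB₁ : ∀ v w, B₁ v w = v ⬝ᵥ M₁ *ᵥ w := by
    intro v w
    conv_lhs => rw [← Matrix.toBilin'_toMatrix' B₁]
    rw [Matrix.toBilin'_apply']
  have hsM₁ : M₁ᵀ = M₁ := by
    ext i j
    simp only [Matrix.transpose_apply, hM₁def, LinearMap.BilinForm.toMatrix'_apply]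
    exact hsymm₁ _ _
  have hsM₂ : M₂ᵀ = M₂ := by
    ext i j
    simp only [Matrix.transpose_apply, hM₂def, LinearMap.BilinForm.toMatrix'_apply]
    exact hsymm₂ _ _
  have hdet₁ : M₁.det ≠ 0 := by
    intro h
    obtain ⟨v, hv0, hv⟩ := Matrix.exists_mulVec_eq_zero_iff.2 h
    exact hv0 (hnd₁ v (fun w => by rw [hsymm₁, hB₁, hv, dotProduct_zero]))
  have hdet₁u : IsUnit M₁.det := isUnit_iff_ne_zero.2 hdet₁
  -- invariance at the matrix level
  have hmat : ∀ (Bf : LinearMap.BilinForm ℝ (Fin 2 → ℝ)) (U : Matrix (Fin 2) (Fin 2) ℝ),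
      (∀ v w, Bf (U *ᵥ v) (U *ᵥ w) = Bf v w) →
      Uᵀ * LinearMap.BilinForm.toMatrix' Bf * U = LinearMap.BilinForm.toMatrix' Bf := by
    intro Bf U h
    have hcomp : Bf.comp (Matrix.toLin' U) (Matrix.toLin' U) = Bf := by
      refine LinearMap.ext fun v => LinearMap.ext fun w => ?_
      simp only [LinearMap.BilinForm.comp_apply, Matrix.toLin'_apply]
      exact h v w
    calc Uᵀ * LinearMap.BilinForm.toMatrix' Bf * U
        = (LinearMap.toMatrix' (Matrix.toLin' U))ᵀ * LinearMap.BilinForm.toMatrix' Bf *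
            LinearMap.toMatrix' (Matrix.toLin' U) := by rw [LinearMap.toMatrix'_toLin']
      _ = LinearMap.BilinForm.toMatrix' (Bf.comp (Matrix.toLin' U) (Matrix.toLin' U)) :=
          (LinearMap.BilinForm.toMatrix'_comp Bf _ _).symm
      _ = LinearMap.BilinForm.toMatrix' Bf := by rw [hcomp]
  -- the key operator
  set T : Matrix (Fin 2) (Fin 2) ℝ := M₁⁻¹ * M₂ with hTdef
  have hM₁T : M₁ * T = M₂ := by
    rw [hTdef, ← mul_assoc, Matrix.mul_nonsing_inv _ hdet₁u, one_mul]
  have hTtr : Tᵀ * M₁ = M₂ := by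
    rw [hTdef, Matrix.transpose_mul, Matrix.transpose_nonsing_inv, hsM₁, hsM₂,
      mul_assoc, Matrix.nonsing_inv_mul _ hdet₁u, mul_one]
  -- T commutes with every element of G
  have hcomm : ∀ g ∈ G, T * (g : Matrix (Fin 2) (Fin 2) ℝ) =
      (g : Matrix (Fin 2) (Fin 2) ℝ) * T := by
    intro g hg
    set U : Matrix (Fin 2) (Fin 2) ℝ := (g : Matrix (Fin 2) (Fin 2) ℝ) with hUdef
    have hUu : IsUnit U.det := (Matrix.isUnit_iff_isUnit_det U).1 g.isUnit
    have hUtu : IsUnit Uᵀ.det := by rwa [Matrix.det_transpose]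
    have h1 : Uᵀ * M₁ * U = M₁ := by
      have := hmat B₁ U (hinv₁ g hg); rwa [← hM₁def] at this
    have h2 : Uᵀ * M₂ * U = M₂ := by
      have := hmat B₂ U (hinv₂ g hg); rwa [← hM₂def] at this
    have e1 : M₁ * U = (Uᵀ)⁻¹ * M₁ := by
      have := congrArg (fun X => (Uᵀ)⁻¹ * X) h1
      simpa [← mul_assoc, Matrix.nonsing_inv_mul _ hUtu] using this
    have e2 : M₂ * U = (Uᵀ)⁻¹ * M₂ := by
      have := congrArg (fun X => (Uᵀ)⁻¹ * X) h2
      simpa [← mul_assoc, Matrix.nonsing_inv_mul _ hUtu] using this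
    have einv : (Uᵀ)⁻¹ = M₁ * U * M₁⁻¹ := by
      rw [e1, mul_assoc, Matrix.mul_nonsing_inv _ hdet₁u, mul_one]
    calc T * U = M₁⁻¹ * (M₂ * U) := by rw [hTdef, mul_assoc]
      _ = M₁⁻¹ * (M₁ * U * M₁⁻¹ * M₂) := by rw [e2, einv]
      _ = (M₁⁻¹ * M₁) * (U * (M₁⁻¹ * M₂)) := by simp only [mul_assoc]
      _ = U * T := by rw [Matrix.nonsing_inv_mul _ hdet₁u, one_mul, hTdef]
  have hB₂ : ∀ v w, B₂ v w = v ⬝ᵥ M₂ *ᵥ w := by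
    intro v w
    conv_lhs => rw [← Matrix.toBilin'_toMatrix' B₂]
    rw [Matrix.toBilin'_apply']
  -- independence at the matrix level
  have hMind : ∀ x y : ℝ, x • M₁ + y • M₂ = 0 → x = 0 ∧ y = 0 := by
    intro x y h
    have hpt : ∀ v w : Fin 2 → ℝ, x * B₁ v w + y * B₂ v w = 0 := by
      intro v w
      have h2 := congrArg (fun A : Matrix (Fin 2) (Fin 2) ℝ => v ⬝ᵥ A *ᵥ w) h
      simp [hB₁, hB₂, Matrix.add_mulVec, Matrix.smul_mulVec, dotProduct_add,
        dotProduct_smul, smul_eq_mul] at h2 ⊢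
      linear_combination h2
    have h0 : (Finsupp.single (0 : Fin 2) x + Finsupp.single 1 y : Fin 2 →₀ ℝ) = 0 := by
      apply hind
      rw [map_add, map_zero, Finsupp.linearCombination_single, Finsupp.linearCombination_single]
      refine LinearMap.ext fun v => LinearMap.ext fun w => ?_
      simp only [LinearMap.add_apply, LinearMap.smul_apply, LinearMap.zero_apply, smul_eq_mul,
        Matrix.cons_val_zero, Matrix.cons_val_one, Matrix.head_cons]
      exact hpt v w
    constructor
    · have h1 := DFunLike.congr_fun h0 (0 : Fin 2)
      simpa using h1
    · have h1 := DFunLike.congr_fun h0 (1 : Fin 2)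
      simpa using h1
  -- Cayley–Hamilton for T
  have hCH : T * T = (T 0 0 + T 1 1) • T -
      (T 0 0 * T 1 1 - T 0 1 * T 1 0) • (1 : Matrix (Fin 2) (Fin 2) ℝ) := by
    ext i j
    fin_cases i <;> fin_cases j <;>
      simp [Matrix.mul_apply, Fin.sum_univ_two, Matrix.one_apply] <;> ring
  rcases le_or_gt 0 ((T 0 0 + T 1 1) ^ 2 - 4 * (T 0 0 * T 1 1 - T 0 1 * T 1 0)) with hD | hD
  · -- real eigenvalue case
    set l : ℝ := ((T 0 0 + T 1 1) +
      Real.sqrt ((T 0 0 + T 1 1) ^ 2 - 4 * (T 0 0 * T 1 1 - T 0 1 * T 1 0))) / 2 with hldef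
    have hdet0 : (T - l • 1).det = 0 := by
      rw [Matrix.det_fin_two]
      simp only [Matrix.sub_apply, Matrix.smul_apply, Matrix.one_apply_eq,
        Matrix.one_apply_ne (by decide : (0 : Fin 2) ≠ 1),
        Matrix.one_apply_ne (by decide : (1 : Fin 2) ≠ 0), smul_eq_mul, mul_one, mul_zero,
        sub_zero, hldef]
      linear_combination (1/4 : ℝ) * Real.sq_sqrt hD
    refine ⟨LinearMap.ker (Matrix.toLin' (T - l • 1)), ?_, ?_, ?_⟩
    · obtain ⟨v, hv0, hv⟩ := Matrix.exists_mulVec_eq_zero_iff.2 hdet0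
      rw [Submodule.ne_bot_iff]
      exact ⟨v, by simp only [LinearMap.mem_ker, Matrix.toLin'_apply]; exact hv, hv0⟩
    · intro htop
      have h0 : Matrix.toLin' (T - l • 1) = 0 := LinearMap.ker_eq_top.1 htop
      have hTl : T - l • 1 = 0 := Matrix.toLin'.injective (by rw [h0, map_zero])
      have hT : T = l • 1 := by rwa [sub_eq_zero] at hTl
      have hz : l • M₁ + (-1 : ℝ) • M₂ = 0 := by
        rw [← hM₁T, hT, Matrix.mul_smul, mul_one]
        simp
      have := (hMind l (-1) hz).2
      norm_num at this
    · intro g hg v hv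
      have hcg := hcomm g hg
      have hcg' : (T - l • 1) * (g : Matrix (Fin 2) (Fin 2) ℝ) =
          (g : Matrix (Fin 2) (Fin 2) ℝ) * (T - l • 1) := by
        rw [Matrix.sub_mul, Matrix.mul_sub, hcg, Matrix.smul_mul, Matrix.mul_smul,
          one_mul, mul_one]
      rw [LinearMap.mem_ker, Matrix.toLin'_apply] at hv ⊢
      rw [Matrix.mulVec_mulVec, hcg', ← Matrix.mulVec_mulVec, hv, Matrix.mulVec_zero]
  · -- complex eigenvalue case: every element of G is scalar
    have hb : T 0 1 ≠ 0 := by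
      intro h; rw [h] at hD; nlinarith [sq_nonneg (T 0 0 - T 1 1)]
    have hscal : ∀ g ∈ G, ∃ α : ℝ, (g : Matrix (Fin 2) (Fin 2) ℝ) =
        α • (1 : Matrix (Fin 2) (Fin 2) ℝ) := by
      intro g hg
      set U : Matrix (Fin 2) (Fin 2) ℝ := (g : Matrix (Fin 2) (Fin 2) ℝ) with hUdef
      have hcg : T * U = U * T := hcomm g hg
      have e : ∀ i j, (T * U) i j = (U * T) i j := fun i j => by rw [hcg]
      have e00 := e 0 0
      have e01 := e 0 1
      simp only [Matrix.mul_apply, Fin.sum_univ_two] at e00 e01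
      set β : ℝ := U 0 1 / T 0 1 with hβdef
      set α : ℝ := U 0 0 - β * T 0 0 with hαdef
      have hUeq : U = α • (1 : Matrix (Fin 2) (Fin 2) ℝ) + β • T := by
        rw [← Matrix.ext_iff, Fin.forall_fin_two]
        simp only [Fin.forall_fin_two, Matrix.add_apply, Matrix.smul_apply, smul_eq_mul]
        refine ⟨⟨?_, ?_⟩, ?_, ?_⟩
        · rw [Matrix.one_apply_eq, hαdef]; ring
        · rw [Matrix.one_apply_ne (by decide : (0 : Fin 2) ≠ 1), hβdef]
          rw [mul_zero, zero_add]
          exact (div_mul_cancel₀ _ hb).symm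
        · rw [Matrix.one_apply_ne (by decide : (1 : Fin 2) ≠ 0), hβdef]
          rw [mul_zero, zero_add]
          rw [div_mul_eq_mul_div, eq_div_iff hb]
          linear_combination e00
        · rw [Matrix.one_apply_eq, hαdef, hβdef]
          field_simp
          linear_combination e01
      -- use invariance of B₁
      have h1 : Uᵀ * M₁ * U = M₁ := by
        have := hmat B₁ U (hinv₁ g hg); rwa [← hM₁def] at this
      have hTT : Tᵀ * (M₁ * T) = (T 0 0 + T 1 1) • M₂ -
          (T 0 0 * T 1 1 - T 0 1 * T 1 0) • M₁ := by
        calc Tᵀ * (M₁ * T) = (Tᵀ * M₁) * T := by rw [mul_assoc]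
          _ = (M₁ * T) * T := by rw [hTtr, hM₁T]
          _ = M₁ * (T * T) := by rw [mul_assoc]
          _ = M₁ * ((T 0 0 + T 1 1) • T -
              (T 0 0 * T 1 1 - T 0 1 * T 1 0) • (1 : Matrix (Fin 2) (Fin 2) ℝ)) := by
              rw [hCH]
          _ = _ := by
              rw [Matrix.mul_sub, Matrix.mul_smul, Matrix.mul_smul, hM₁T, mul_one]
      have expand : Uᵀ * M₁ * U =
          (α ^ 2 - β ^ 2 * (T 0 0 * T 1 1 - T 0 1 * T 1 0)) • M₁ +
          (2 * α * β + β ^ 2 * (T 0 0 + T 1 1)) • M₂ := by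
        rw [hUeq]
        rw [Matrix.transpose_add, Matrix.transpose_smul, Matrix.transpose_smul,
          Matrix.transpose_one]
        simp only [Matrix.add_mul, Matrix.mul_add, Matrix.smul_mul, Matrix.mul_smul,
          one_mul, mul_one, mul_assoc]
        rw [hTT, hTtr, hM₁T]
        module
      rw [expand] at h1
      have key : ((α ^ 2 - β ^ 2 * (T 0 0 * T 1 1 - T 0 1 * T 1 0)) - 1) • M₁ +
          (2 * α * β + β ^ 2 * (T 0 0 + T 1 1)) • M₂ = 0 := by
        rw [sub_smul, one_smul]
        rw [show ((α ^ 2 - β ^ 2 * (T 0 0 * T 1 1 - T 0 1 * T 1 0)) • M₁ - M₁) +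
            (2 * α * β + β ^ 2 * (T 0 0 + T 1 1)) • M₂ =
            ((α ^ 2 - β ^ 2 * (T 0 0 * T 1 1 - T 0 1 * T 1 0)) • M₁ +
            (2 * α * β + β ^ 2 * (T 0 0 + T 1 1)) • M₂) - M₁ by module]
        rw [h1, sub_self]
      obtain ⟨hc1, hc2⟩ := hMind _ _ key
      have hβ : β = 0 := by
        by_contra hβ
        have hβ2 : 0 < β ^ 2 := by positivity
        have hkey2 : β ^ 2 * β ^ 2 *
            ((T 0 0 + T 1 1) ^ 2 - 4 * (T 0 0 * T 1 1 - T 0 1 * T 1 0)) = 4 * β ^ 2 := by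
          linear_combination (4 * β ^ 2) * hc1 +
            (β ^ 2 * (T 0 0 + T 1 1) - 2 * α * β) * hc2
        nlinarith [mul_pos hβ2 hβ2, hD, hkey2]
      exact ⟨α, by rw [hUeq, hβ, zero_smul, add_zero]⟩
    refine ⟨Submodule.span ℝ {(Pi.single 0 1 : Fin 2 → ℝ)}, ?_, ?_, ?_⟩
    · rw [Submodule.ne_bot_iff]
      refine ⟨Pi.single 0 1, Submodule.mem_span_singleton_self _, ?_⟩
      intro h
      have := congrFun h 0
      simp [Pi.single_apply] at this
    · intro h
      have hmem : (Pi.single 1 1 : Fin 2 → ℝ) ∈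
          Submodule.span ℝ {(Pi.single 0 1 : Fin 2 → ℝ)} := h.symm ▸ Submodule.mem_top
      obtain ⟨c, hc⟩ := Submodule.mem_span_singleton.1 hmem
      have := congrFun hc 1
      simp [Pi.single_apply] at this
    · intro g hg v hv
      obtain ⟨α, hα⟩ := hscal g hg
      rw [hα, Matrix.smul_mulVec, Matrix.one_mulVec]
      exact Submodule.smul_mem _ α hv
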